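/- arXiv:math-ph/0005018 — 2 statements merged into one kernel-verified Lean document; each statement's English description precedes it below -/
import Mathlib

section
/- Let G be a compact abelian group with normalized Haar measure μ, F: G → ℝ continuous, and suppose there is a continuous character η: G → S¹ which is surjective and satisfies F̂(η) ≠ 0. Then for every ε > 0, μ({g ∈ G : sup_{h∈G} |F(g·h) − F(g·h⁻¹)| ≤ ε}) ≤ ε / (2|F̂(η)|). -/
open MeasureTheory Real Set

noncomputable instance : MeasurableSpace Circle := borel Circle
instance : BorelSpace Circle := ⟨rfl⟩

private lemma cont_integrable {X : Type*} [TopologicalSpace X] [CompactSpace X]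
    [MeasurableSpace X] [OpensMeasurableSpace X] (μ : Measure X) [IsFiniteMeasure μ]
    {f : X → ℂ} (hf : Continuous f) : Integrable f μ := by
  obtain ⟨C, hC⟩ := isCompact_univ.exists_bound_of_continuousOn hf.continuousOn
  exact (integrable_const C).mono' hf.aestronglyMeasurable
    (Filter.Eventually.of_forall fun x => hC x (mem_univ x))

private lemma exp_mul_im (x : ℝ) (c : ℂ) :
    (Complex.exp (x * Complex.I) * c).im = ‖c‖ * Real.sin (x + Complex.arg c) := by
  conv_lhs => rw [← Complex.norm_mul_exp_arg_mul_I c]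
  rw [mul_left_comm, ← Complex.exp_add, ← add_mul, ← Complex.ofReal_add, Complex.mul_im,
    Complex.ofReal_re, Complex.ofReal_im, Complex.exp_ofReal_mul_I_im]
  ring

private lemma key_real {α : ℝ} (hα0 : 0 ≤ α) (hα1 : α ≤ 1) {v : ℝ}
    (hv : v ∈ Set.Ioc (-(1/4) : ℝ) (3/4)) (h : |Real.sin (2*π*v)| ≤ α) :
    |v| ≤ α/4 ∨ |v - 1/2| ≤ α/4 := by
  have hπ := Real.pi_pos
  set β := π*α/2 with hβ
  have hβ0 : 0 ≤ β := by positivity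
  have hβπ : β ≤ π/2 := by nlinarith
  have hsinβ : α ≤ Real.sin β := by
    have h2 := Real.mul_le_sin hβ0 hβπ
    have : 2/π * β = α := by field_simp [hβ]; ring
    linarith [this ▸ h2]
  have habs : ∀ z : ℝ, -(π/2) ≤ z → z ≤ π/2 → |Real.sin z| ≤ α → |z| ≤ β := by
    intro z hz1 hz2 hsz
    by_contra hcon
    push_neg at hcon
    have hsabs : Real.sin |z| = |Real.sin z| := by
      rcases le_or_gt 0 z with hz0 | hz0
      · rw [abs_of_nonneg hz0, abs_of_nonneg (Real.sin_nonneg_of_nonneg_of_le_pi hz0 (by linarith))]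
      · rw [abs_of_neg hz0, Real.sin_neg, abs_of_nonpos
          (Real.sin_nonpos_of_nonpos_of_neg_pi_le (le_of_lt hz0) (by linarith))]
    have h1 : Real.sin β < Real.sin |z| :=
      Real.strictMonoOn_sin ⟨by linarith, hβπ⟩
        ⟨by linarith [abs_nonneg z], abs_le.mpr ⟨hz1, hz2⟩⟩ hcon
    rw [hsabs] at h1
    linarith
  set y := 2*π*v with hy
  have hy1 : -(π/2) < y := by rw [hy]; nlinarith [hv.1]
  have hy2 : y ≤ 3*π/2 := by rw [hy]; nlinarith [hv.2]
  rcases le_or_gt y (π/2) with hcase | hcase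
  · left
    have := habs y (le_of_lt hy1) hcase h
    have hvy : |y| = 2*π*|v| := by rw [hy, abs_mul, abs_of_pos (by positivity : (0:ℝ) < 2*π)]
    rw [hvy] at this
    nlinarith
  · right
    have hs : Real.sin (π - y) = Real.sin y := Real.sin_pi_sub y
    have := habs (π - y) (by linarith) (by linarith) (by rw [hs]; exact h)
    have hvy : |π - y| = 2*π*|v - 1/2| := by
      rw [show π - y = -(2*π*(v - 1/2)) by rw [hy]; ring, abs_neg, abs_mul,
        abs_of_pos (by positivity : (0:ℝ) < 2*π)]
    rw [hvy] at this
    nlinarith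

/-- abstract core of Theorem 1. If `F : G → ℝ` is continuous on a compact
abelian group with normalized Haar measure `μ`, and `η` is a continuous surjective character
with `F̂(η) ≠ 0`, then for all `ε > 0`,
`μ {g : ∀ h, |F (g*h) - F (g*h⁻¹)| ≤ ε} ≤ ε / (2 |F̂(η)|)`. -/
theorem measure_almost_symmetric_le {G : Type*} [CommGroup G] [TopologicalSpace G]
    [IsTopologicalGroup G] [CompactSpace G] [MeasurableSpace G] [BorelSpace G]
    (μ : Measure G) [μ.IsHaarMeasure] [IsProbabilityMeasure μ]
    (F : G → ℝ) (hF : Continuous F)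
    (η : G →* Circle) (hηc : Continuous η) (hηs : Function.Surjective η)
    (hFη : ∫ h, (F h : ℂ) * (starRingEnd ℂ) (η h : ℂ) ∂μ ≠ 0)
    (ε : ℝ) (hε : 0 < ε) :
    μ {g : G | ∀ h : G, |F (g * h) - F (g * h⁻¹)| ≤ ε} ≤
      ENNReal.ofReal
        (ε / (2 * ‖∫ h, (F h : ℂ) * (starRingEnd ℂ) (η h : ℂ) ∂μ‖)) := by
  set c : ℂ := ∫ h, (F h : ℂ) * (starRingEnd ℂ) (η h : ℂ) ∂μ with hcdef
  set S : Set G := {g : G | ∀ h : G, |F (g * h) - F (g * h⁻¹)| ≤ ε} with hSdef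
  have hr : 0 < ‖c‖ := norm_pos_iff.mpr hFη
  set r : ℝ := ‖c‖ with hrdef
  set α : ℝ := ε / (2*r) with hαdef
  have hα0 : 0 < α := by positivity
  rcases lt_or_ge 1 α with hα1 | hα1
  · calc μ S ≤ μ univ := measure_mono (subset_univ _)
      _ = 1 := measure_univ
      _ ≤ ENNReal.ofReal α := ENNReal.one_le_ofReal.mpr (le_of_lt hα1)
  -- Step A : S ⊆ η ⁻¹' B
  set B : Set Circle := {z : Circle | |((z : ℂ) * c).im| ≤ ε/2} with hBdef
  have hconj : (starRingEnd ℂ) c = ∫ x, (F x : ℂ) * (η x : ℂ) ∂μ := by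
    rw [hcdef, ← integral_conj]
    congr 1; ext x
    simp [map_mul, Complex.conj_conj, Complex.conj_ofReal]
  have hSB : S ⊆ η ⁻¹' B := by
    intro g hg
    have hJ1 : ∫ h, (F (g * h) : ℂ) * (starRingEnd ℂ) (η h : ℂ) ∂μ = (η g : ℂ) * c := by
      have h1 := integral_mul_left_eq_self (μ := μ)
        (fun x => (F x : ℂ) * (starRingEnd ℂ) ((η (g⁻¹ * x) : ℂ))) g
      simp only [inv_mul_cancel_left] at h1
      rw [h1, hcdef, ← integral_const_mul]
      congr 1; ext x
      rw [map_mul η, map_inv η, Circle.coe_mul, map_mul, Circle.coe_inv_eq_conj,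
        Complex.conj_conj]
      ring
    have hJ2 : ∫ h, (F (g * h⁻¹) : ℂ) * (starRingEnd ℂ) (η h : ℂ) ∂μ
        = (starRingEnd ℂ) ((η g : ℂ) * c) := by
      have h0 := integral_inv_eq_self
        (fun x => (F (g * x⁻¹) : ℂ) * (starRingEnd ℂ) ((η x : ℂ))) μ
      simp only [inv_inv] at h0
      rw [← h0]
      have h1 := integral_mul_left_eq_self (μ := μ)
        (fun x => (F x : ℂ) * ((η (g⁻¹ * x) : ℂ))) g
      simp only [inv_mul_cancel_left] at h1
      have h2 : ∫ x, (F (g * x) : ℂ) * (starRingEnd ℂ) ((η x⁻¹ : ℂ)) ∂μ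
          = ∫ x, (F (g * x) : ℂ) * ((η x : ℂ)) ∂μ := by
        congr 1; ext x
        rw [map_inv η, Circle.coe_inv_eq_conj, Complex.conj_conj]
      rw [h2, h1, map_mul, hconj, ← integral_const_mul]
      congr 1; ext x
      rw [map_mul η, map_inv η, Circle.coe_mul, Circle.coe_inv_eq_conj]
      ring
    have hint1 : Integrable (fun h => (F (g * h) : ℂ) * (starRingEnd ℂ) (η h : ℂ)) μ := by
      apply cont_integrable
      exact ((Complex.continuous_ofReal.comp (hF.comp (continuous_mul_left g))).mul
        (Complex.continuous_conj.comp (continuous_subtype_val.comp hηc)))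
    have hint2 : Integrable (fun h => (F (g * h⁻¹) : ℂ) * (starRingEnd ℂ) (η h : ℂ)) μ := by
      apply cont_integrable
      exact ((Complex.continuous_ofReal.comp (hF.comp ((continuous_mul_left g).comp
        continuous_inv))).mul (Complex.continuous_conj.comp (continuous_subtype_val.comp hηc)))
    have hIle : ‖(η g : ℂ) * c - (starRingEnd ℂ) ((η g : ℂ) * c)‖ ≤ ε := by
      rw [← hJ2, ← hJ1, ← integral_sub hint1 hint2]
      have := norm_integral_le_of_norm_le_const (μ := μ)
        (f := fun h => (F (g * h) : ℂ) * (starRingEnd ℂ) (η h : ℂ)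
          - (F (g * h⁻¹) : ℂ) * (starRingEnd ℂ) (η h : ℂ)) (C := ε) ?_
      · simpa [measure_univ] using this
      · refine Filter.Eventually.of_forall fun h => ?_
        show ‖(F (g * h) : ℂ) * (starRingEnd ℂ) (η h : ℂ)
          - (F (g * h⁻¹) : ℂ) * (starRingEnd ℂ) (η h : ℂ)‖ ≤ ε
        rw [← sub_mul]
        rw [norm_mul]
        have h1 : ‖((F (g * h) : ℂ)) - (F (g * h⁻¹) : ℂ)‖ = |F (g * h) - F (g * h⁻¹)| := by
          rw [← Complex.ofReal_sub, Complex.norm_real, Real.norm_eq_abs]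
        have h2 : ‖(starRingEnd ℂ) ((η h : ℂ))‖ = 1 := by
          rw [RCLike.norm_conj]
          exact Circle.norm_coe (η h)
        rw [h1, h2, mul_one]
        exact hg h
    have him : |((η g : ℂ) * c).im| ≤ ε/2 := by
      rw [Complex.sub_conj] at hIle
      simp only [norm_mul, Complex.norm_real, Complex.norm_I, mul_one, Real.norm_eq_abs,
        abs_mul, _root_.abs_two] at hIle
      linarith [abs_nonneg ((η g : ℂ) * c).im]
    exact him
  -- Step B : measure computation on the circle
  haveI fact1 : Fact ((0:ℝ) < 1) := ⟨one_pos⟩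
  have hηm : Measurable η := hηc.measurable
  have hBm : MeasurableSet B := by
    have hcont : Continuous fun z : Circle => |((z : ℂ) * c).im| :=
      (Complex.continuous_im.comp (continuous_subtype_val.mul continuous_const)).abs
    exact (isClosed_le hcont continuous_const).measurableSet
  have hμS : μ S ≤ (μ.map η) B := by
    rw [Measure.map_apply hηm hBm]
    exact measure_mono hSB
  -- toCircle is surjective
  have htc_surj : Function.Surjective (AddCircle.toCircle (T := 1)) := by
    intro z
    exact ⟨(AddCircle.homeomorphCircle (one_ne_zero)).symm z,
      (AddCircle.homeomorphCircle_apply one_ne_zero _).symm.trans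
        ((AddCircle.homeomorphCircle one_ne_zero).apply_symm_apply z)⟩
  have htc_meas : Measurable (AddCircle.toCircle (T := 1)) :=
    AddCircle.continuous_toCircle.measurable
  haveI hPac : IsProbabilityMeasure (volume : Measure (AddCircle (1:ℝ))) :=
    ⟨by rw [AddCircle.measure_univ]; exact ENNReal.ofReal_one⟩
  set μC : Measure Circle := (volume : Measure (AddCircle (1:ℝ))).map AddCircle.toCircle
    with hμCdef
  haveI hμCli : μC.IsMulLeftInvariant := by
    constructor
    intro z
    obtain ⟨x, hx⟩ := htc_surj z
    rw [hμCdef, Measure.map_map (measurable_const_mul z) htc_meas]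
    have : ((z * ·) ∘ AddCircle.toCircle) = AddCircle.toCircle ∘ (x + ·) := by
      funext u
      simp [Function.comp, AddCircle.toCircle_add, hx]
    rw [this, ← Measure.map_map htc_meas (measurable_const_add x),
      map_add_left_eq_self]
  haveI hμCp : IsProbabilityMeasure μC := Measure.isProbabilityMeasure_map htc_meas.aemeasurable
  haveI hμCh : μC.IsHaarMeasure :=
    Measure.isHaarMeasure_of_isCompact_nonempty_interior μC univ isCompact_univ
      (by rw [interior_univ]; exact univ_nonempty)
      (by rw [measure_univ]; exact one_ne_zero) (by rw [measure_univ]; exact ENNReal.one_ne_top)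
  haveI hνli : (μ.map η).IsMulLeftInvariant :=
    MeasureTheory.isMulLeftInvariant_map η.toMulHom hηm hηs
  haveI hνp : IsProbabilityMeasure (μ.map η) := Measure.isProbabilityMeasure_map hηm.aemeasurable
  haveI hνh : (μ.map η).IsHaarMeasure :=
    Measure.isHaarMeasure_of_isCompact_nonempty_interior _ univ isCompact_univ
      (by rw [interior_univ]; exact univ_nonempty)
      (by rw [measure_univ]; exact one_ne_zero) (by rw [measure_univ]; exact ENNReal.one_ne_top)
  have hνμC : μ.map η = μC := Measure.isHaarMeasure_eq_of_isProbabilityMeasure _ _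
  -- transfer to the real line
  set θ : ℝ := Complex.arg c with hθdef
  set t : ℝ := -(1/4) - θ/(2*π) with htdef
  have hπ := Real.pi_pos
  have hpre : μC B = volume (((↑) : ℝ → AddCircle (1:ℝ)) ⁻¹' (AddCircle.toCircle ⁻¹' B)
      ∩ Ioc t (t+1)) := by
    rw [hμCdef, Measure.map_apply htc_meas hBm,
      ← (AddCircle.measurePreserving_mk (1:ℝ) t).measure_preimage
        ((htc_meas hBm).nullMeasurableSet),
      Measure.restrict_apply ((AddCircle.measurePreserving_mk (1:ℝ) t).measurable
        (htc_meas hBm))]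
  have hsubset : ((↑) : ℝ → AddCircle (1:ℝ)) ⁻¹' (AddCircle.toCircle ⁻¹' B) ∩ Ioc t (t+1)
      ⊆ Icc (-(θ/(2*π)) - α/4) (-(θ/(2*π)) + α/4)
        ∪ Icc (-(θ/(2*π)) + 1/2 - α/4) (-(θ/(2*π)) + 1/2 + α/4) := by
    rintro u ⟨hu1, hu2⟩
    have him : ((AddCircle.toCircle ((u : AddCircle (1:ℝ))) : ℂ) * c).im
        = r * Real.sin (2*π*u + θ) := by
      rw [AddCircle.toCircle_apply_mk, Circle.coe_exp, exp_mul_im]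
      norm_num
      rfl
    have hcond : |Real.sin (2*π*u + θ)| ≤ α := by
      have hB' : |((AddCircle.toCircle ((u : AddCircle (1:ℝ))) : ℂ) * c).im| ≤ ε/2 := hu1
      rw [him, abs_mul, abs_of_pos hr] at hB'
      rw [hαdef]
      rw [le_div_iff₀ (by positivity)]
      linarith
    have hkey := key_real (le_of_lt hα0) hα1 (v := u + θ/(2*π)) ?_ ?_
    · rcases hkey with hk | hk
      · left
        rw [abs_le] at hk
        constructor <;> [linarith [hk.1]; linarith [hk.2]]
      · right
        rw [abs_le] at hk
        constructor <;> [linarith [hk.1]; linarith [hk.2]]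
    · constructor
      · have := hu2.1; rw [htdef] at this; linarith
      · have := hu2.2; rw [htdef] at this; linarith
    · have : 2*π*(u + θ/(2*π)) = 2*π*u + θ := by field_simp
      rw [this]; exact hcond
  calc μ S ≤ (μ.map η) B := hμS
    _ = μC B := by rw [hνμC]
    _ ≤ volume (Icc (-(θ/(2*π)) - α/4) (-(θ/(2*π)) + α/4)
        ∪ Icc (-(θ/(2*π)) + 1/2 - α/4) (-(θ/(2*π)) + 1/2 + α/4)) := by
      rw [hpre]; exact measure_mono hsubset
    _ ≤ volume (Icc (-(θ/(2*π)) - α/4) (-(θ/(2*π)) + α/4))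
        + volume (Icc (-(θ/(2*π)) + 1/2 - α/4) (-(θ/(2*π)) + 1/2 + α/4)) :=
      measure_union_le _ _
    _ = ENNReal.ofReal (α/2) + ENNReal.ofReal (α/2) := by
      rw [Real.volume_Icc, Real.volume_Icc]
      congr 1 <;> congr 1 <;> ring
    _ = ENNReal.ofReal α := by
      rw [← ENNReal.ofReal_add (by positivity) (by positivity)]
      congr 1; ring
end

section
/- Let f: ℤ → ℝ be almost periodic (its set of translates is precompact in ℓ∞(ℤ)) with hull U and normalized Haar measure μ (for the compact abelian group structure on U extending translation). If there exists a continuous character η: U → S¹ with η surjective and f̂(η) := ∫_U g(0) conj(η(g)) dμ(g) ≠ 0, then for all ε > 0, μ({g ∈ U : ‖Rg − g‖_∞ ≤ ε}) ≤ ε / (2|f̂(η)|). -/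
open MeasureTheory Real Set

open MeasureTheory Real Set

lemma aux_arcsin_le {s : ℝ} (h0 : 0 ≤ s) (h1 : s ≤ 1) : Real.arcsin s ≤ π / 2 * s := by
  have hπ := Real.pi_pos
  rw [Real.arcsin_le_iff_le_sin ⟨by linarith, h1⟩
    ⟨by nlinarith, by nlinarith⟩]
  have h := Real.mul_le_sin (x := π / 2 * s) (by positivity) (by nlinarith)
  calc s = 2 / π * (π / 2 * s) := by field_simp
  _ ≤ Real.sin (π / 2 * s) := h

lemma aux_sin_band_subset {s : ℝ} (h0 : 0 ≤ s) (h1 : s ≤ 1) :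
    {θ : ℝ | |Real.sin θ| ≤ s} ∩ Set.Ioc (-π) (-π + 2 * π) ⊆
      (Set.Icc (-Real.arcsin s) (Real.arcsin s) ∪ Set.Icc (-π) (-π + Real.arcsin s))
        ∪ Set.Icc (π - Real.arcsin s) π := by
  rintro θ ⟨hθ, hθl, hθr⟩
  simp only [Set.mem_setOf_eq] at hθ
  have hθr' : θ ≤ π := by linarith [hθr]
  set b := Real.arcsin s with hb
  have hb0 : 0 ≤ b := Real.arcsin_nonneg.2 h0
  have hbπ : b ≤ π / 2 := Real.arcsin_le_pi_div_two s
  have habs : ∀ x : ℝ, -(π/2) ≤ x → x ≤ π/2 → |Real.sin x| ≤ s → x ∈ Set.Icc (-b) b := by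
    intro x hx1 hx2 hxs
    rw [abs_le] at hxs
    constructor
    · have : Real.arcsin (-s) ≤ Real.arcsin (Real.sin x) :=
        Real.monotone_arcsin hxs.1
      rwa [Real.arcsin_neg, Real.arcsin_sin hx1 hx2, ← hb] at this
    · have : Real.arcsin (Real.sin x) ≤ Real.arcsin s :=
        Real.monotone_arcsin hxs.2
      rwa [Real.arcsin_sin hx1 hx2, ← hb] at this
  rcases le_or_gt θ (-(π/2)) with h | h
  · -- θ ∈ (-π, -π/2]
    left; right
    have hs' : |Real.sin (θ + π)| ≤ s := by
      rw [Real.sin_add_pi, abs_neg]; exact hθ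
    have := habs (θ + π) (by linarith [Real.pi_pos]) (by linarith) hs'
    exact ⟨hθl.le, by linarith [this.2]⟩
  rcases le_or_gt θ (π/2) with h' | h'
  · left; left
    exact habs θ (by linarith) h' hθ
  · -- θ ∈ (π/2, π]
    right
    have hs' : |Real.sin (π - θ)| ≤ s := by rw [Real.sin_pi_sub]; exact hθ
    have := habs (π - θ) (by linarith [Real.pi_pos]) (by linarith) hs'
    exact ⟨by linarith [this.2], hθr'⟩

lemma aux_volume_band {s : ℝ} (h0 : 0 ≤ s) (h1 : s ≤ 1) :
    volume ({θ : ℝ | |Real.sin θ| ≤ s} ∩ Set.Ioc (-π) (-π + 2 * π)) ≤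
      ENNReal.ofReal (4 * Real.arcsin s) := by
  have hb0 : 0 ≤ Real.arcsin s := Real.arcsin_nonneg.2 h0
  refine (measure_mono (aux_sin_band_subset h0 h1)).trans ?_
  refine (measure_union_le _ _).trans ?_
  refine le_trans (add_le_add (measure_union_le _ _) le_rfl) ?_
  simp only [Real.volume_Icc]
  rw [← ENNReal.ofReal_add (by linarith) (by linarith),
    ← ENNReal.ofReal_add (by linarith) (by linarith)]
  exact ENNReal.ofReal_le_ofReal (by linarith)

noncomputable instance inst_s19 : MeasurableSpace Circle := borel Circle
instance inst_s19_2 : BorelSpace Circle := ⟨rfl⟩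

lemma aux_circle_band (ν : Measure Circle) [ν.IsHaarMeasure] [IsProbabilityMeasure ν] (s : ℝ) :
    ν {w : Circle | |(w : ℂ).im| ≤ s} ≤ ENNReal.ofReal s := by
  rcases lt_or_ge s 0 with hs | hs0
  · have : {w : Circle | |(w : ℂ).im| ≤ s} = ∅ := by
      ext w; simp only [Set.mem_setOf_eq, Set.mem_empty_iff_false, iff_false]
      intro h; exact absurd (le_trans (abs_nonneg _) h) (not_le.2 hs)
    simp [this]
  rcases le_or_gt 1 s with hs1 | hs1
  · refine (measure_mono (Set.subset_univ _)).trans ?_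
    rw [measure_univ]
    simpa using ENNReal.ofReal_le_ofReal hs1
  -- main case : 0 ≤ s < 1
  haveI : Fact (0 < 2 * π) := ⟨by positivity⟩
  set f := AddCircle.homeomorphCircle' with hf
  have hfm : Measurable f := f.continuous.measurable
  set ρ := (AddCircle.haarAddCircle : Measure (AddCircle (2 * π))) with hρ
  have hhom : ∀ (x y : AddCircle (2 * π)), f (x + y) = f x * f y := by
    intro x y
    exact Real.Angle.toCircle_add x y
  haveI hinv : (ρ.map f).IsMulLeftInvariant := by
    constructor
    intro w
    rw [Measure.map_map (measurable_const_mul w) hfm]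
    have hcomp : ((w * ·) ∘ f) = f ∘ (f.symm w + ·) := by
      funext y
      simp only [Function.comp_apply, hhom, Homeomorph.apply_symm_apply]
    rw [hcomp, ← Measure.map_map hfm (measurable_const_add _),
      MeasureTheory.Measure.IsAddLeftInvariant.map_add_left_eq_self (f.symm w)]
  haveI : IsProbabilityMeasure (ρ.map f) :=
    Measure.isProbabilityMeasure_map hfm.aemeasurable
  haveI : (ρ.map f).IsOpenPosMeasure :=
    f.continuous.isOpenPosMeasure_map f.surjective
  haveI : (ρ.map f).IsHaarMeasure :=
    { lt_top_of_isCompact := fun K _ => lt_of_le_of_lt prob_le_one ENNReal.one_lt_top }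
  have hν : ν = ρ.map f := Measure.isHaarMeasure_eq_of_isProbabilityMeasure ν (ρ.map f)
  have hWc : IsClosed {w : Circle | |(w : ℂ).im| ≤ s} := by
    have : Continuous fun w : Circle => |(w : ℂ).im| :=
      (continuous_abs).comp (Complex.continuous_im.comp continuous_subtype_val)
    exact isClosed_le this continuous_const
  rw [hν, Measure.map_apply hfm hWc.measurableSet]
  set S := f ⁻¹' {w : Circle | |(w : ℂ).im| ≤ s} with hS
  have hSm : MeasurableSet S := (hWc.preimage f.continuous).measurableSet
  have hpre : (QuotientAddGroup.mk : ℝ → AddCircle (2 * π)) ⁻¹' S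
      = {θ : ℝ | |Real.sin θ| ≤ s} := by
    ext θ
    simp only [hS, Set.mem_preimage, Set.mem_setOf_eq]
    have : f (θ : AddCircle (2 * π)) = Circle.exp θ := AddCircle.homeomorphCircle'_apply_mk θ
    rw [this]
    rw [show ((Circle.exp θ : Circle) : ℂ) = Complex.exp (θ * Complex.I) from Circle.coe_exp θ]
    rw [Complex.exp_ofReal_mul_I_im]
  have hvol : (volume : Measure (AddCircle (2 * π))) S
      = volume ({θ : ℝ | |Real.sin θ| ≤ s} ∩ Set.Ioc (-π) (-π + 2 * π)) := by
    rw [AddCircle.add_projection_respects_measure (2 * π) (-π) hSm, hpre]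
  have hsmul : (volume : Measure (AddCircle (2 * π))) S = ENNReal.ofReal (2 * π) * ρ S := by
    rw [AddCircle.volume_eq_smul_haarAddCircle, Measure.smul_apply, smul_eq_mul]
  have h2π0 : ENNReal.ofReal (2 * π) ≠ 0 := by
    simp [ENNReal.ofReal_eq_zero, not_le]; positivity
  have hρS : ρ S = (ENNReal.ofReal (2 * π))⁻¹ * (volume : Measure (AddCircle (2 * π))) S := by
    rw [hsmul, ← mul_assoc, ENNReal.inv_mul_cancel h2π0 ENNReal.ofReal_ne_top, one_mul]
  rw [hρS, hvol]
  calc (ENNReal.ofReal (2 * π))⁻¹ * volume ({θ : ℝ | |Real.sin θ| ≤ s} ∩ Set.Ioc (-π) (-π + 2 * π))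
      ≤ (ENNReal.ofReal (2 * π))⁻¹ * ENNReal.ofReal (4 * Real.arcsin s) :=
        mul_le_mul_right (aux_volume_band hs0 hs1.le) _
    _ = ENNReal.ofReal (4 * Real.arcsin s) / ENNReal.ofReal (2 * π) := by
        rw [div_eq_mul_inv, mul_comm]
    _ = ENNReal.ofReal (4 * Real.arcsin s / (2 * π)) := by
        rw [ENNReal.ofReal_div_of_pos (by positivity)]
    _ ≤ ENNReal.ofReal s := by
        apply ENNReal.ofReal_le_ofReal
        have hb := aux_arcsin_le hs0 hs1.le
        have hπ := Real.pi_pos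
        rw [div_le_iff₀ (by positivity)]
        nlinarith



/-- Theorem 1 in explicit form: let `U` be the hull of an almost periodic
function, i.e. a compact abelian group whose elements are sequences (via the injection `ι`),
in which the translates `t m` of the original function are dense and the group law extends
translation: `ι (t m * g) n = ι g (n + m)` (so `ι (t 0) = ι 1` is the original function `f`).
Assume evaluation at `0` is continuous, `μ` is the normalized Haar measure, and there is a
continuous surjective character `η : U → S¹` with `f̂(η) = ∫ ι g 0 conj(η g) dμ ≠ 0`. Then for
every `ε > 0`, `μ {g : ‖R (ι g) - ι g‖_∞ ≤ ε} ≤ ε / (2 |f̂(η)|)`. -/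
theorem measure_almost_reflection_symmetric_hull {U : Type*} [CommGroup U]
    [TopologicalSpace U] [IsTopologicalGroup U] [CompactSpace U]
    [MeasurableSpace U] [BorelSpace U]
    (μ : Measure U) [μ.IsHaarMeasure] [IsProbabilityMeasure μ]
    (ι : U → ℤ → ℝ) (hι : Function.Injective ι)
    (t : ℤ → U) (hdense : Dense (Set.range t))
    (htrans : ∀ (m : ℤ) (g : U) (n : ℤ), ι (t m * g) n = ι g (n + m))
    (hcont : Continuous fun g : U => ι g 0)
    (η : U →* Circle) (hηc : Continuous η) (hηs : Function.Surjective η)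
    (hFη : ∫ g, (ι g 0 : ℂ) * (starRingEnd ℂ) (η g : ℂ) ∂μ ≠ 0)
    (ε : ℝ) (hε : 0 < ε) :
    μ {g : U | ∀ n : ℤ, |ι g (-n) - ι g n| ≤ ε} ≤
      ENNReal.ofReal
        (ε / (2 * ‖∫ g, (ι g 0 : ℂ) * (starRingEnd ℂ) (η g : ℂ) ∂μ‖)) := by
  set c := ∫ g, (ι g 0 : ℂ) * (starRingEnd ℂ) (η g : ℂ) ∂μ with hc
  set a := ‖c‖ with hA
  have ha : 0 < a := norm_pos_iff.mpr hFη
  set s := ε / (2 * a) with hs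
  set A := {g : U | ∀ n : ℤ, |ι g (-n) - ι g n| ≤ ε} with hAdef
  -- Step 1 : for g in A, |ι (g h) 0 - ι (g h⁻¹) 0| ≤ ε for all h
  have key : ∀ g ∈ A, ∀ h : U, |ι (g * h) 0 - ι (g * h⁻¹) 0| ≤ ε := by
    intro g hg h
    set S := {h : U | |ι (g * h) 0 - ι (g * h⁻¹) 0| ≤ ε} with hSdef
    have hcl : IsClosed S := by
      have h1 : Continuous fun h : U => ι (g * h) 0 := hcont.comp (continuous_mul_left g)
      have h2 : Continuous fun h : U => ι (g * h⁻¹) 0 :=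
        hcont.comp ((continuous_mul_left g).comp continuous_inv)
      exact isClosed_le (continuous_abs.comp (h1.sub h2)) continuous_const
    have hsub : Set.range t ⊆ S := by
      rintro _ ⟨m, rfl⟩
      have e1 : ι (g * t m) 0 = ι g m := by
        rw [mul_comm, htrans m g 0, zero_add]
      have e2 : ι (g * (t m)⁻¹) 0 = ι g (-m) := by
        have h3 := htrans m ((t m)⁻¹ * g) (-m)
        rw [mul_inv_cancel_left, neg_add_cancel] at h3
        rw [mul_comm, ← h3]
      simp only [hSdef, Set.mem_setOf_eq, e1, e2]
      have h4 := hg m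
      rwa [abs_sub_comm] at h4
    have huniv : S = Set.univ := by
      apply Set.eq_univ_of_univ_subset
      rw [← hdense.closure_eq]
      exact hcl.closure_subset_iff.mpr hsub
    have hhS : h ∈ S := by rw [huniv]; trivial
    exact hhS
  -- integrability helpers
  have hcη : Continuous fun h : U => ((η h : Circle) : ℂ) :=
    continuous_subtype_val.comp hηc
  have hint1 : ∀ g : U,
      Integrable (fun h => (ι (g * h) 0 : ℂ) * (starRingEnd ℂ) (η h : ℂ)) μ := by
    intro g
    apply Continuous.integrable_of_hasCompactSupport ?_ (HasCompactSupport.of_compactSpace _)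
    exact ((Complex.continuous_ofReal.comp (hcont.comp (continuous_mul_left g))).mul hcη.star)
  have hint2 : ∀ g : U,
      Integrable (fun h => (ι (g * h⁻¹) 0 : ℂ) * (starRingEnd ℂ) (η h : ℂ)) μ := by
    intro g
    apply Continuous.integrable_of_hasCompactSupport ?_ (HasCompactSupport.of_compactSpace _)
    exact ((Complex.continuous_ofReal.comp
      (hcont.comp ((continuous_mul_left g).comp continuous_inv))).mul hcη.star)
  -- Step 2 : Fourier identities
  have hI1 : ∀ g : U, (∫ h, (ι (g * h) 0 : ℂ) * (starRingEnd ℂ) (η h : ℂ) ∂μ)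
      = (η g : ℂ) * c := by
    intro g
    have step : (fun h : U => (ι (g * h) 0 : ℂ) * (starRingEnd ℂ) (η h : ℂ))
        = fun h : U => (fun h' : U => (ι h' 0 : ℂ) * (starRingEnd ℂ) (η (g⁻¹ * h') : ℂ)) (g * h) := by
      funext h
      simp only [inv_mul_cancel_left]
    rw [step, integral_mul_left_eq_self
      (fun h' : U => (ι h' 0 : ℂ) * (starRingEnd ℂ) (η (g⁻¹ * h') : ℂ)) g]
    have step2 : (fun h' : U => (ι h' 0 : ℂ) * (starRingEnd ℂ) (η (g⁻¹ * h') : ℂ))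
        = fun h' : U => (η g : ℂ) * ((ι h' 0 : ℂ) * (starRingEnd ℂ) (η h' : ℂ)) := by
      funext h'
      have hcoe : ((η (g⁻¹ * h') : Circle) : ℂ) = (((η g)⁻¹ : Circle) : ℂ) * (η h' : ℂ) := by
        rw [map_mul, map_inv, Circle.coe_mul]
      rw [hcoe, map_mul, Circle.coe_inv_eq_conj, Complex.conj_conj]
      ring
    rw [step2, integral_const_mul, ← hc]
  have hconjc : (∫ h, (ι h 0 : ℂ) * ((η h : Circle) : ℂ) ∂μ) = (starRingEnd ℂ) c := by
    rw [hc, ← integral_conj]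
    congr 1; funext h
    rw [map_mul, Complex.conj_conj, Complex.conj_ofReal]
  have hI2 : ∀ g : U, (∫ h, (ι (g * h⁻¹) 0 : ℂ) * (starRingEnd ℂ) (η h : ℂ) ∂μ)
      = (starRingEnd ℂ) ((η g : ℂ)) * (starRingEnd ℂ) c := by
    intro g
    have step : (fun h : U => (ι (g * h⁻¹) 0 : ℂ) * (starRingEnd ℂ) (η h : ℂ))
        = fun h : U => (fun h' : U => (ι (g * h') 0 : ℂ) * ((η h' : Circle) : ℂ)) h⁻¹ := by
      funext h
      simp only [map_inv, Circle.coe_inv_eq_conj]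
    rw [step, integral_inv_eq_self (fun h' : U => (ι (g * h') 0 : ℂ) * ((η h' : Circle) : ℂ)) μ]
    have step2 : (fun h' : U => (ι (g * h') 0 : ℂ) * ((η h' : Circle) : ℂ))
        = fun h : U => (fun h' : U => (ι h' 0 : ℂ) * ((η (g⁻¹ * h') : Circle) : ℂ)) (g * h) := by
      funext h
      simp only [inv_mul_cancel_left]
    rw [step2, integral_mul_left_eq_self
      (fun h' : U => (ι h' 0 : ℂ) * ((η (g⁻¹ * h') : Circle) : ℂ)) g]
    have step3 : (fun h' : U => (ι h' 0 : ℂ) * ((η (g⁻¹ * h') : Circle) : ℂ))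
        = fun h' : U => (starRingEnd ℂ) ((η g : ℂ)) * ((ι h' 0 : ℂ) * ((η h' : Circle) : ℂ)) := by
      funext h'
      rw [map_mul, map_inv, Circle.coe_mul, Circle.coe_inv_eq_conj]
      ring
    rw [step3, integral_const_mul, hconjc]
  -- Step 3 : band estimate for g in A
  have hband : ∀ g ∈ A, |((η g : ℂ) * c).im| ≤ ε / 2 := by
    intro g hg
    have hdiff : (η g : ℂ) * c - (starRingEnd ℂ) ((η g : ℂ) * c)
        = ∫ h, ((ι (g * h) 0 - ι (g * h⁻¹) 0 : ℝ) : ℂ) * (starRingEnd ℂ) (η h : ℂ) ∂μ := by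
      rw [map_mul, ← hI1 g, ← hI2 g, ← integral_sub (hint1 g) (hint2 g)]
      congr 1; funext h
      push_cast
      ring
    have hnorm : ‖(η g : ℂ) * c - (starRingEnd ℂ) ((η g : ℂ) * c)‖ ≤ ε := by
      rw [hdiff]
      have hb : ∀ᵐ h ∂μ, ‖((ι (g * h) 0 - ι (g * h⁻¹) 0 : ℝ) : ℂ) * (starRingEnd ℂ) (η h : ℂ)‖ ≤ ε := by
        filter_upwards with h
        rw [norm_mul, Complex.norm_real, Real.norm_eq_abs,
          Complex.norm_conj, Circle.norm_coe, mul_one]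
        exact key g hg h
      have := norm_integral_le_of_norm_le_const hb
      simpa [measure_univ] using this
    have hsc := Complex.sub_conj ((η g : ℂ) * c)
    rw [hsc] at hnorm
    rw [norm_mul, Complex.norm_real, Complex.norm_I, mul_one, Real.norm_eq_abs] at hnorm
    rw [abs_mul, abs_two] at hnorm
    linarith [abs_nonneg (((η g : ℂ) * c).im)]
  -- Step 4 : measure estimate via the circle
  set u : Circle := Circle.exp (Complex.arg c) with hu
  set W₀ := {w : Circle | |(w : ℂ).im| ≤ s} with hW₀
  have hsubset : A ⊆ η ⁻¹' ((fun w => w * u) ⁻¹' W₀) := by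
    intro g hg
    have h1 := hband g hg
    simp only [Set.mem_preimage, hW₀, Set.mem_setOf_eq]
    have hau : (a : ℂ) * (u : ℂ) = c := by
      rw [hu, Circle.coe_exp]
      exact Complex.norm_mul_exp_arg_mul_I c
    have hc_eq : (η g : ℂ) * c = (a : ℂ) * (((η g * u : Circle)) : ℂ) := by
      rw [Circle.coe_mul, ← hau]; ring
    rw [hc_eq] at h1
    rw [Complex.mul_im, Complex.ofReal_re, Complex.ofReal_im, zero_mul, add_zero] at h1
    rw [abs_mul, abs_of_pos ha] at h1
    rw [hs, ← div_div]
    rw [le_div_iff₀ ha]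
    linarith
  have hW₀closed : IsClosed W₀ := by
    have : Continuous fun w : Circle => |(w : ℂ).im| :=
      continuous_abs.comp (Complex.continuous_im.comp continuous_subtype_val)
    exact isClosed_le this continuous_const
  have hWmeas : MeasurableSet ((fun w : Circle => w * u) ⁻¹' W₀) :=
    (hW₀closed.preimage (continuous_mul_right u)).measurableSet
  haveI : IsProbabilityMeasure (μ.map η) :=
    Measure.isProbabilityMeasure_map hηc.measurable.aemeasurable
  haveI : (μ.map η).IsHaarMeasure :=
    Measure.isHaarMeasure_map_of_isFiniteMeasure μ η hηc hηs
  calc μ A ≤ μ (η ⁻¹' ((fun w => w * u) ⁻¹' W₀)) := measure_mono hsubset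
    _ = (μ.map η) ((fun w => w * u) ⁻¹' W₀) :=
        (Measure.map_apply hηc.measurable hWmeas).symm
    _ = (μ.map η) W₀ := by
        have : (fun w : Circle => w * u) = fun w : Circle => u * w := by
          funext w; rw [mul_comm]
        rw [this]
        exact measure_preimage_mul (μ.map η) u W₀
    _ ≤ ENNReal.ofReal s := aux_circle_band (μ.map η) s
end
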